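/- Let μ be a full non-atomic Borel measure on a non-compact locally compact Cantor set X with μ(𝔐_μ) = 0. If U is a compact open set with μ(U) = ∞, then for every a > 0 there exists a compact open subset V ⊆ U with a ≤ μ(V) < ∞. -/

import Mathlib

open MeasureTheory Topology ENNReal TopologicalSpace

/-- A set is compact open. -/
def IsCompactOpen {X : Type*} [TopologicalSpace X] (U : Set X) : Prop :=
  IsCompact U ∧ IsOpen U

/-- The defective set of a measure: points all of whose compact open
neighbourhoods have infinite measure. -/
def DefectiveSet {X : Type*} [TopologicalSpace X] [MeasurableSpace X]
    (μ : Measure X) : Set X :=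
  {x | ∀ U : Set X, IsCompactOpen U → x ∈ U → μ U = ⊤}

/-- A compact open set `V` is good for `μ`. -/
def GoodSet {X : Type*} [TopologicalSpace X] [MeasurableSpace X]
    (μ : Measure X) (V : Set X) : Prop :=
  ∀ U : Set X, IsCompactOpen U → μ U < μ V →
    ∃ W : Set X, W ⊆ V ∧ IsCompactOpen W ∧ μ W = μ U

/-- The measure `μ` is good: every compact open set is good for `μ`. -/
def Good {X : Type*} [TopologicalSpace X] [MeasurableSpace X]
    (μ : Measure X) : Prop :=
  ∀ V : Set X, IsCompactOpen V → GoodSet μ V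

/-- The restriction of `μ` to the (open) subset `A` is good: compact open
subsets of the subspace `A` are exactly compact open subsets of `X` contained
in `A`. -/
def GoodOn {X : Type*} [TopologicalSpace X] [MeasurableSpace X]
    (μ : Measure X) (A : Set X) : Prop :=
  ∀ U V : Set X, IsCompactOpen U → U ⊆ A → IsCompactOpen V → V ⊆ A → μ U < μ V →
    ∃ W : Set X, W ⊆ V ∧ IsCompactOpen W ∧ μ W = μ U

/-- The compact open values set, as a set of extended nonnegative reals. -/
def SE {X : Type*} [TopologicalSpace X] [MeasurableSpace X]
    (μ : Measure X) : Set ℝ≥0∞ :=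
  {v | v ≠ ⊤ ∧ ∃ U : Set X, IsCompactOpen U ∧ μ U = v}

/-- The compact open values set of the restriction of `μ` to `A`. -/
def SEOn {X : Type*} [TopologicalSpace X] [MeasurableSpace X]
    (μ : Measure X) (A : Set X) : Set ℝ≥0∞ :=
  {v | v ≠ ⊤ ∧ ∃ U : Set X, IsCompactOpen U ∧ U ⊆ A ∧ μ U = v}

/-- The compact open values set, as a set of reals. -/
def Sreal {X : Type*} [TopologicalSpace X] [MeasurableSpace X]
    (μ : Measure X) : Set ℝ :=
  {r | ∃ U : Set X, IsCompactOpen U ∧ μ U ≠ ⊤ ∧ (μ U).toReal = r}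

/-- The compact open values set of the restriction of `μ` to `A`, as reals. -/
def SrealOn {X : Type*} [TopologicalSpace X] [MeasurableSpace X]
    (μ : Measure X) (A : Set X) : Set ℝ :=
  {r | ∃ U : Set X, IsCompactOpen U ∧ U ⊆ A ∧ μ U ≠ ⊤ ∧ (μ U).toReal = r}

/-- A measure is full if every non-empty open set has positive measure. -/
def IsFull {X : Type*} [TopologicalSpace X] [MeasurableSpace X]
    (μ : Measure X) : Prop :=
  ∀ U : Set X, IsOpen U → U.Nonempty → 0 < μ U

/-- A measure is non-atomic if every singleton has measure zero. -/
def NonAtomic {X : Type*} [MeasurableSpace X] (μ : Measure X) : Prop :=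
  ∀ x : X, μ {x} = 0

/-- The space has a countable basis consisting of compact open sets. -/
def HasCompactOpenBasis (X : Type*) [TopologicalSpace X] : Prop :=
  ∃ B : Set (Set X), B.Countable ∧ TopologicalSpace.IsTopologicalBasis B ∧
    ∀ U ∈ B, IsCompact U ∧ IsOpen U

/-- The space has no isolated points. -/
def NoIsolatedPoints (X : Type*) [TopologicalSpace X] : Prop :=
  ∀ x : X, ¬ IsOpen ({x} : Set X)

theorem stmt3 {X : Type*} [TopologicalSpace X] [MeasurableSpace X] [BorelSpace X]
    [MetrizableSpace X] [LocallyCompactSpace X] [TotallyDisconnectedSpace X]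
    [NoncompactSpace X] (hB : HasCompactOpenBasis X) (hni : NoIsolatedPoints X)
    (μ : Measure X) (hfull : IsFull μ) (hna : NonAtomic μ)
    (h0 : μ (DefectiveSet μ) = 0)
    (U : Set X) (hU : IsCompactOpen U) (hUinf : μ U = ⊤) (a : ℝ) (ha : 0 < a) :
    ∃ V : Set X, V ⊆ U ∧ IsCompactOpen V ∧ ENNReal.ofReal a ≤ μ V ∧ μ V ≠ ⊤ := by
  obtain ⟨𝔅, h𝔅c, h𝔅b, h𝔅co⟩ := hB
  -- μ (U \ DefectiveSet μ) = ⊤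
  have hdiff : μ (U \ DefectiveSet μ) = ⊤ := by
    by_contra h
    have hle : μ U ≤ μ (DefectiveSet μ) + μ (U \ DefectiveSet μ) := by
      calc μ U ≤ μ (DefectiveSet μ ∪ (U \ DefectiveSet μ)) :=
            measure_mono (fun x hx => by
              by_cases hxm : x ∈ DefectiveSet μ
              · exact Or.inl hxm
              · exact Or.inr ⟨hx, hxm⟩)
        _ ≤ μ (DefectiveSet μ) + μ (U \ DefectiveSet μ) := measure_union_le _ _
    rw [h0, zero_add, hUinf] at hle
    exact h (top_le_iff.mp hle)
  -- the family of basis sets inside U with finite measure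
  set C : Set (Set X) := {B | B ∈ 𝔅 ∧ B ⊆ U ∧ μ B < ⊤} with hC
  have hCc : C.Countable := h𝔅c.mono (fun B hB => hB.1)
  have hcover : U \ DefectiveSet μ ⊆ ⋃₀ C := by
    intro x hx
    have hx' : ¬ ∀ N : Set X, IsCompactOpen N → x ∈ N → μ N = ⊤ := hx.2
    push_neg at hx'
    obtain ⟨N, hN, hxN, hNfin⟩ := hx'
    have hNU : IsOpen (N ∩ U) := hN.2.inter hU.2
    obtain ⟨B, hB𝔅, hxB, hBsub⟩ := h𝔅b.exists_subset_of_mem_open (Set.mem_inter hxN hx.1) hNU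
    refine ⟨B, ⟨hB𝔅, fun y hy => (hBsub hy).2, ?_⟩, hxB⟩
    exact lt_of_le_of_lt (measure_mono (fun y hy => (hBsub hy).1)) hNfin.lt_top
  have hCinf : μ (⋃₀ C) = ⊤ :=
    top_le_iff.mp (hdiff ▸ measure_mono hcover)
  have hCne : C.Nonempty := by
    rcases C.eq_empty_or_nonempty with h | h
    · rw [h] at hCinf; simp at hCinf
    · exact h
  obtain ⟨f, hf⟩ := Set.Countable.exists_eq_range hCc hCne
  have hfC : ∀ n, f n ∈ C := fun n => hf ▸ Set.mem_range_self n
  -- partial unions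
  set s : ℕ → Set X := fun n => ⋃ i ∈ Finset.range (n + 1), f i with hs
  have hsmono : Monotone s := fun m n hmn =>
    Set.biUnion_subset_biUnion_left (Finset.range_subset_range.mpr (by omega))
  have hsU : ∀ n, s n ⊆ U := fun n =>
    Set.iUnion₂_subset (fun i _ => (hfC i).2.1)
  have hsco : ∀ n, IsCompactOpen (s n) := fun n =>
    ⟨(Finset.range (n + 1)).finite_toSet.isCompact_biUnion
        (fun i _ => (h𝔅co _ (hfC i).1).1),
      isOpen_biUnion (fun i _ => (h𝔅co _ (hfC i).1).2)⟩
  have hsfin : ∀ n, μ (s n) < ⊤ := fun n =>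
    lt_of_le_of_lt (measure_biUnion_finset_le _ _)
      (ENNReal.sum_lt_top.mpr (fun i _ => (hfC i).2.2))
  have hsunion : (⋃ n, s n) = ⋃₀ C := by
    rw [hf, Set.sUnion_range]
    apply Set.Subset.antisymm
    · exact Set.iUnion_subset (fun n => Set.iUnion₂_subset (fun i _ => Set.subset_iUnion f i))
    · exact Set.iUnion_subset (fun i => Set.subset_iUnion_of_subset i
        (fun x hx => Set.mem_iUnion₂.mpr ⟨i, Finset.self_mem_range_succ i, hx⟩))
  have hsup : (⨆ n, μ (s n)) = ⊤ := by
    rw [← hsmono.directed_le.measure_iUnion, hsunion, hCinf]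
  have : ENNReal.ofReal a < ⨆ n, μ (s n) := by
    rw [hsup]; exact ENNReal.ofReal_lt_top
  obtain ⟨n, hn⟩ := lt_iSup_iff.mp this
  exact ⟨s n, hsU n, hsco n, hn.le, (hsfin n).ne⟩
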